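/- Let $(Q,X)$ be a finite acyclic EI quiver and $\mathcal{C} = \mathcal{C}(Q,X)$ the associated finite EI category. Then the category $\mathrm{rep}(Q,X)$ of representations of $(Q,X)$ is equivalent to the category $\mathbb{K}\mathcal{C}\text{-mod}$ of finite-dimensional left modules over the category algebra $\mathbb{K}\mathcal{C}$. -/

import Mathlib

/-- A finite EI quiver `(Q,X)`: a finite quiver `(Q0, Q1, s, t)` together with a
finite group `G i = X(i)` at each vertex `i` and a finite nonempty
`(G (t a), G (s a))`-biset `B a = X(a)` (left action `l`, right action `r`) at each
arrow `a`. -/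
structure EIData where
  Q0 : Type
  Q1 : Type
  [fin0 : Fintype Q0]
  [dec0 : DecidableEq Q0]
  [fin1 : Fintype Q1]
  [dec1 : DecidableEq Q1]
  s : Q1 → Q0
  t : Q1 → Q0
  G : Q0 → Type
  [grp : ∀ i, Group (G i)]
  [finG : ∀ i, Fintype (G i)]
  [decG : ∀ i, DecidableEq (G i)]
  B : Q1 → Type
  [finB : ∀ a, Fintype (B a)]
  [decB : ∀ a, DecidableEq (B a)]
  [neB : ∀ a, Nonempty (B a)]
  l : ∀ a, G (t a) → B a → B a
  r : ∀ a, B a → G (s a) → B a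
  l_one : ∀ a b, l a 1 b = b
  l_mul : ∀ a g h b, l a (g * h) b = l a g (l a h b)
  r_one : ∀ a b, r a b 1 = b
  r_mul : ∀ a b g h, r a b (g * h) = r a (r a b g) h
  lr : ∀ a g b h, r a (l a g b) h = l a g (r a b h)

attribute [instance] EIData.fin0 EIData.dec0 EIData.fin1 EIData.dec1 EIData.grp
  EIData.finG EIData.decG EIData.finB EIData.decB EIData.neB

namespace EIData

/-- The EI quiver is acyclic: the quiver has no nontrivial oriented cycle. -/
def Acyclic (D : EIData) : Prop :=
  ∀ i : D.Q0, ¬ Relation.TransGen (fun i j => ∃ a, D.s a = i ∧ D.t a = j) i i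

/-- The assignment `X` is action-free: the left and right actions on each biset
`X(a)` are free. -/
def ActionFree (D : EIData) : Prop :=
  (∀ a g (b : D.B a), D.l a g b = b → g = 1) ∧
  (∀ a (b : D.B a) g, D.r a b g = b → g = 1)

/-- Generators of the category algebra `K𝒞(Q,X)`: the morphisms `g ∈ G i = X(i)`
(in particular the identities `e_i`), and the morphisms `b ∈ B a = X(a)`. -/
def Gen (D : EIData) : Type := (Σ i : D.Q0, D.G i) ⊕ (Σ a : D.Q1, D.B a)

/-- The defining relations of the category algebra `K𝒞(Q,X)` of the finite EI
category `𝒞(Q,X)` associated to a finite EI quiver: by [CW, Proposition 2.2],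
`K𝒞(Q,X)` is the tensor algebra of `V = ⊕_{a} KX(a)` over `A = ∏_i KX(i)`, i.e. the
algebra generated by the elements of the groups `X(i)` and of the bisets `X(a)`
subject to: group multiplication in each `X(i)`, orthogonality of distinct vertices,
`∑_i e_i = 1`, and the biset bimodule relations. -/
inductive CatRel (K : Type) [Field K] (D : EIData) :
    FreeAlgebra K D.Gen → FreeAlgebra K D.Gen → Prop
  | grp_mul (i : D.Q0) (g h : D.G i) :
      CatRel K D
        (FreeAlgebra.ι K (Sum.inl ⟨i, g⟩) * FreeAlgebra.ι K (Sum.inl ⟨i, h⟩))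
        (FreeAlgebra.ι K (Sum.inl ⟨i, g * h⟩))
  | grp_orth (i j : D.Q0) (g : D.G i) (h : D.G j) (hij : i ≠ j) :
      CatRel K D
        (FreeAlgebra.ι K (Sum.inl ⟨i, g⟩) * FreeAlgebra.ι K (Sum.inl ⟨j, h⟩)) 0
  | unit :
      CatRel K D (∑ i : D.Q0, FreeAlgebra.ι K (Sum.inl ⟨i, (1 : D.G i)⟩)) 1
  | left_act (a : D.Q1) (g : D.G (D.t a)) (b : D.B a) :
      CatRel K D
        (FreeAlgebra.ι K (Sum.inl ⟨D.t a, g⟩) * FreeAlgebra.ι K (Sum.inr ⟨a, b⟩))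
        (FreeAlgebra.ι K (Sum.inr ⟨a, D.l a g b⟩))
  | right_act (a : D.Q1) (b : D.B a) (g : D.G (D.s a)) :
      CatRel K D
        (FreeAlgebra.ι K (Sum.inr ⟨a, b⟩) * FreeAlgebra.ι K (Sum.inl ⟨D.s a, g⟩))
        (FreeAlgebra.ι K (Sum.inr ⟨a, D.r a b g⟩))
  | left_orth (j : D.Q0) (g : D.G j) (a : D.Q1) (b : D.B a) (h : j ≠ D.t a) :
      CatRel K D
        (FreeAlgebra.ι K (Sum.inl ⟨j, g⟩) * FreeAlgebra.ι K (Sum.inr ⟨a, b⟩)) 0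
  | right_orth (a : D.Q1) (b : D.B a) (j : D.Q0) (g : D.G j) (h : j ≠ D.s a) :
      CatRel K D
        (FreeAlgebra.ι K (Sum.inr ⟨a, b⟩) * FreeAlgebra.ι K (Sum.inl ⟨j, g⟩)) 0

/-- The category algebra `K𝒞(Q,X)` of the finite EI category associated to the
finite EI quiver `(Q,X)`. -/
def CatAlg (K : Type) [Field K] (D : EIData) : Type := RingQuot (CatRel K D)

noncomputable instance (K : Type) [Field K] (D : EIData) : Ring (CatAlg K D) :=
  inferInstanceAs (Ring (RingQuot (CatRel K D)))

noncomputable instance (K : Type) [Field K] (D : EIData) : Algebra K (CatAlg K D) :=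
  inferInstanceAs (Algebra K (RingQuot (CatRel K D)))

/-- The image in the category algebra of a generator (a group element or a biset
element). -/
noncomputable def gen (K : Type) [Field K] (D : EIData) (x : D.Gen) : CatAlg K D :=
  RingQuot.mkAlgHom K (CatRel K D) (FreeAlgebra.ι K x)

/-- The idempotent `e_i` of the category algebra at a vertex `i`. -/
noncomputable def idem (K : Type) [Field K] (D : EIData) (i : D.Q0) : CatAlg K D :=
  gen K D (Sum.inl ⟨i, (1 : D.G i)⟩)

/-- The double of a finite EI quiver: adjoin a reversed arrow `a* : t a → s a` for
each arrow `a`, with biset `X(a*) = X(a)*` the dual biset. -/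
def double (D : EIData) : EIData where
  Q0 := D.Q0
  Q1 := D.Q1 ⊕ D.Q1
  fin0 := D.fin0
  dec0 := D.dec0
  fin1 := inferInstance
  dec1 := inferInstance
  grp := D.grp
  finG := D.finG
  decG := D.decG
  finB := fun a => match a with
    | .inl a => D.finB a
    | .inr a => D.finB a
  decB := fun a => match a with
    | .inl a => D.decB a
    | .inr a => D.decB a
  neB := fun a => match a with
    | .inl a => D.neB a
    | .inr a => D.neB a
  s := Sum.elim D.s D.t
  t := Sum.elim D.t D.s
  G := D.G
  B := fun a => match a with
    | .inl a => D.B a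
    | .inr a => D.B a
  l := fun a => match a with
    | .inl a => D.l a
    | .inr a => fun g b => D.r a b g⁻¹
  r := fun a => match a with
    | .inl a => D.r a
    | .inr a => fun b g => D.l a g⁻¹ b
  l_one := by
    rintro (a | a) b <;> first | exact D.l_one a b | exact (congrArg (D.r a b) inv_one).trans (D.r_one a b) | simp [D.l_one, D.r_one]
  l_mul := by
    rintro (a | a) g h b <;> first | exact D.l_mul a g h b | exact (congrArg (D.r a b) (mul_inv_rev g h)).trans (D.r_mul a b h⁻¹ g⁻¹) | simp [D.l_mul, D.r_mul, mul_inv_rev]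
  r_one := by
    rintro (a | a) b <;> first | exact D.r_one a b | exact (congrArg (fun x => D.l a x b) inv_one).trans (D.l_one a b) | simp [D.r_one, D.l_one]
  r_mul := by
    rintro (a | a) b g h <;> first | exact D.r_mul a b g h | exact (congrArg (fun x => D.l a x b) (mul_inv_rev g h)).trans (D.l_mul a h⁻¹ g⁻¹ b) | simp [D.r_mul, D.l_mul, mul_inv_rev]
  lr := by
    rintro (a | a) g b h <;> first | exact D.lr a g b h | exact (D.lr a h⁻¹ b g⁻¹).symm | simp [D.lr]

/-- The preprojective relation `ρ = ∑_{a ∈ Q₁} (∑_{b ∈ R a} b b* - ∑_{c ∈ L a} c* c)`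
in the category algebra of the doubled EI quiver, for chosen representative sets
`R a` (of right orbits) and `L a` (of left orbits) of each biset `X(a)`. -/
noncomputable def prho (K : Type) [Field K] (D : EIData)
    (R L : ∀ a : D.Q1, Finset (D.B a)) : CatAlg K D.double :=
  ∑ a : D.Q1,
    ((∑ b ∈ R a, gen K D.double (Sum.inr ⟨Sum.inl a, b⟩) *
        gen K D.double (Sum.inr ⟨Sum.inr a, b⟩))
      - ∑ c ∈ L a, gen K D.double (Sum.inr ⟨Sum.inr a, c⟩) *
        gen K D.double (Sum.inr ⟨Sum.inl a, c⟩))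

/-- The relation presenting `Π(Q,X)` as the quotient of `K𝒞(双Q,双X)` by the
two-sided ideal generated by `ρ`. -/
def prerel (K : Type) [Field K] (D : EIData) (R L : ∀ a : D.Q1, Finset (D.B a)) :
    CatAlg K D.double → CatAlg K D.double → Prop :=
  fun u v => v = 0 ∧ u = prho K D R L

/-- The preprojective algebra `Π(Q,X)` of a finite EI quiver. -/
def PiAlg (K : Type) [Field K] (D : EIData) (R L : ∀ a : D.Q1, Finset (D.B a)) :
    Type :=
  RingQuot (prerel K D R L)

noncomputable instance (K : Type) [Field K] (D : EIData)
    (R L : ∀ a : D.Q1, Finset (D.B a)) : Ring (PiAlg K D R L) :=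
  inferInstanceAs (Ring (RingQuot (prerel K D R L)))

noncomputable instance (K : Type) [Field K] (D : EIData)
    (R L : ∀ a : D.Q1, Finset (D.B a)) : Algebra K (PiAlg K D R L) :=
  inferInstanceAs (Algebra K (RingQuot (prerel K D R L)))

/-- `R` is a set of representatives of the right `X(s a)`-orbits of `X(a)`, and
`L` a set of representatives of the left `X(t a)`-orbits. -/
def IsRepSets (D : EIData) (R L : ∀ a : D.Q1, Finset (D.B a)) : Prop :=
  (∀ (a : D.Q1) (x : D.B a), ∃! b, b ∈ R a ∧ ∃ g, x = D.r a b g) ∧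
  (∀ (a : D.Q1) (x : D.B a), ∃! c, c ∈ L a ∧ ∃ g, x = D.l a g c)

end EIData

open CategoryTheory

variable (K : Type) [Field K] (D : EIData)

/-- A representation `M = (M_i, M_a)` of a finite EI quiver `(Q,X)`: a
finite-dimensional `KX(i)`-module `M_i` for each vertex `i` and, for each arrow `a`,
a `KX(t a)`-linear map `M_a : KX(a) ⊗_{KX(s a)} M_{s a} → M_{t a}`, encoded as the
`K`-bilinear balanced map `(b, m) ↦ M_a (b ⊗ m)`. -/
structure EIRep where
  M : ∀ i : D.Q0, Type
  [acg : ∀ i, AddCommGroup (M i)]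
  [modK : ∀ i, Module K (M i)]
  [modA : ∀ i, Module (MonoidAlgebra K (D.G i)) (M i)]
  [tower : ∀ i, IsScalarTower K (MonoidAlgebra K (D.G i)) (M i)]
  [findim : ∀ i, Module.Finite K (M i)]
  act : ∀ a : D.Q1, D.B a → M (D.s a) →ₗ[K] M (D.t a)
  act_r : ∀ (a : D.Q1) (b : D.B a) (g : D.G (D.s a)) (m : M (D.s a)),
    act a (D.r a b g) m
      = act a b ((MonoidAlgebra.single g (1 : K) : MonoidAlgebra K (D.G (D.s a))) • m)
  act_l : ∀ (a : D.Q1) (g : D.G (D.t a)) (b : D.B a) (m : M (D.s a)),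
    act a (D.l a g b) m
      = (MonoidAlgebra.single g (1 : K) : MonoidAlgebra K (D.G (D.t a))) • act a b m

attribute [instance] EIRep.acg EIRep.modK EIRep.modA EIRep.tower EIRep.findim

/-- Morphisms of representations of a finite EI quiver. -/
@[ext]
structure EIRepHom (M N : EIRep K D) where
  f : ∀ i : D.Q0, M.M i →ₗ[MonoidAlgebra K (D.G i)] N.M i
  comm : ∀ (a : D.Q1) (b : D.B a) (m : M.M (D.s a)),
    f (D.t a) (M.act a b m) = N.act a b (f (D.s a) m)

/-- The category `rep(Q,X)` of representations of a finite EI quiver. -/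
noncomputable instance : Category (EIRep K D) where
  Hom M N := EIRepHom K D M N
  id M := ⟨fun _ => LinearMap.id, fun _ _ _ => rfl⟩
  comp {M N O} f g := ⟨fun i => (g.f i).comp (f.f i), by
    intro a b m
    simp only [LinearMap.comp_apply, f.comm, g.comm]⟩
  id_comp f := EIRepHom.ext (funext fun i => LinearMap.comp_id (f.f i))
  comp_id f := EIRepHom.ext (funext fun i => LinearMap.id_comp (f.f i))
  assoc f g h := EIRepHom.ext (funext fun i => rfl)

/-- The category of finite-dimensional left modules over the category algebra
`K𝒞(Q,X)`. -/
noncomputable def ModFin :=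
  CategoryTheory.ObjectProperty.FullSubcategory
    (fun M : ModuleCat (EIData.CatAlg K D) =>
      Module.Finite K (RestrictScalars K (EIData.CatAlg K D) M))

noncomputable instance : Category (ModFin K D) :=
  inferInstanceAs (Category (CategoryTheory.ObjectProperty.FullSubcategory _))

namespace EIEquiv

open EIData

variable {K : Type} [Field K] {D : EIData}

section AlgLemmas

variable (K D)

lemma rel_eq {x y : FreeAlgebra K D.Gen} (h : CatRel K D x y) :
    RingQuot.mkAlgHom K (CatRel K D) x = RingQuot.mkAlgHom K (CatRel K D) y :=
  RingQuot.mkAlgHom_rel K h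

lemma gen_grp_mul (i : D.Q0) (g h : D.G i) :
    gen K D (Sum.inl ⟨i, g⟩) * gen K D (Sum.inl ⟨i, h⟩) = gen K D (Sum.inl ⟨i, g * h⟩) := by
  have := rel_eq K D (CatRel.grp_mul i g h)
  erw [map_mul] at this
  exact this

lemma gen_grp_orth (i j : D.Q0) (g : D.G i) (h : D.G j) (hij : i ≠ j) :
    gen K D (Sum.inl ⟨i, g⟩) * gen K D (Sum.inl ⟨j, h⟩) = 0 := by
  have := rel_eq K D (CatRel.grp_orth i j g h hij)
  erw [map_mul, map_zero] at this
  exact this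

lemma sum_idem : (∑ i : D.Q0, idem K D i) = 1 := by
  have := rel_eq K D (CatRel.unit (K := K) (D := D))
  rw [map_sum, map_one] at this
  exact this

lemma gen_left_act (a : D.Q1) (g : D.G (D.t a)) (b : D.B a) :
    gen K D (Sum.inl ⟨D.t a, g⟩) * gen K D (Sum.inr ⟨a, b⟩)
      = gen K D (Sum.inr ⟨a, D.l a g b⟩) := by
  have := rel_eq K D (CatRel.left_act a g b)
  erw [map_mul] at this
  exact this

lemma gen_right_act (a : D.Q1) (b : D.B a) (g : D.G (D.s a)) :
    gen K D (Sum.inr ⟨a, b⟩) * gen K D (Sum.inl ⟨D.s a, g⟩)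
      = gen K D (Sum.inr ⟨a, D.r a b g⟩) := by
  have := rel_eq K D (CatRel.right_act a b g)
  erw [map_mul] at this
  exact this

lemma gen_left_orth (j : D.Q0) (g : D.G j) (a : D.Q1) (b : D.B a) (h : j ≠ D.t a) :
    gen K D (Sum.inl ⟨j, g⟩) * gen K D (Sum.inr ⟨a, b⟩) = 0 := by
  have := rel_eq K D (CatRel.left_orth j g a b h)
  erw [map_mul, map_zero] at this
  exact this

lemma gen_right_orth (a : D.Q1) (b : D.B a) (j : D.Q0) (g : D.G j) (h : j ≠ D.s a) :
    gen K D (Sum.inr ⟨a, b⟩) * gen K D (Sum.inl ⟨j, g⟩) = 0 := by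
  have := rel_eq K D (CatRel.right_orth a b j g h)
  erw [map_mul, map_zero] at this
  exact this

lemma idem_mul_idem (i : D.Q0) : idem K D i * idem K D i = idem K D i := by
  unfold EIData.idem
  rw [gen_grp_mul, mul_one]

lemma idem_mul_gen_inl (i j : D.Q0) (g : D.G j) :
    idem K D i * gen K D (Sum.inl ⟨j, g⟩)
      = if i = j then gen K D (Sum.inl ⟨j, g⟩) else 0 := by
  unfold EIData.idem
  split
  · subst ‹i = j›; rw [gen_grp_mul, one_mul]
  · exact gen_grp_orth K D _ _ _ _ ‹i ≠ j›

lemma idem_mul_gen_inr (i : D.Q0) (a : D.Q1) (b : D.B a) :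
    idem K D i * gen K D (Sum.inr ⟨a, b⟩)
      = if i = D.t a then gen K D (Sum.inr ⟨a, b⟩) else 0 := by
  unfold EIData.idem
  split
  · subst ‹i = D.t a›; rw [gen_left_act, D.l_one]
  · exact gen_left_orth K D _ _ _ _ ‹i ≠ D.t a›

lemma gen_inl_mul_idem (j : D.Q0) (g : D.G j) (i : D.Q0) :
    gen K D (Sum.inl ⟨j, g⟩) * idem K D i
      = if j = i then gen K D (Sum.inl ⟨j, g⟩) else 0 := by
  unfold EIData.idem
  split
  · subst ‹j = i›; rw [gen_grp_mul, mul_one]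
  · exact gen_grp_orth K D _ _ _ _ ‹j ≠ i›

lemma gen_inr_mul_idem (a : D.Q1) (b : D.B a) (i : D.Q0) :
    gen K D (Sum.inr ⟨a, b⟩) * idem K D i
      = if D.s a = i then gen K D (Sum.inr ⟨a, b⟩) else 0 := by
  unfold EIData.idem
  split
  · subst ‹D.s a = i›; rw [gen_right_act, D.r_one]
  · rw [gen_right_orth K D a b i 1 (Ne.symm ‹D.s a ≠ i›)]

end AlgLemmas

end EIEquiv
namespace EIEquiv

open EIData

variable {K : Type} [Field K] {D : EIData}

section FunctorF

variable (M : EIRep K D)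

/-- smul by a fixed element of the monoid algebra, as a `K`-linear endomap. -/
noncomputable def maSmul (i : D.Q0) (x : MonoidAlgebra K (D.G i)) :
    M.M i →ₗ[K] M.M i :=
  haveI : SMulCommClass (MonoidAlgebra K (D.G i)) K (M.M i) :=
    (IsScalarTower.to_smulCommClass (R := K) (A := MonoidAlgebra K (D.G i))
      (M := M.M i)).symm
  DistribMulAction.toLinearMap K (M.M i) x

@[simp] lemma maSmul_apply (i : D.Q0) (x : MonoidAlgebra K (D.G i)) (m : M.M i) :
    maSmul M i x m = x • m := rfl

/-- The endomorphism of `⊕ᵢ Mᵢ` attached to a generator. -/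
noncomputable def genEnd : D.Gen → Module.End K (∀ i, M.M i)
  | Sum.inl ⟨i, g⟩ =>
      (LinearMap.single K (fun j => M.M j) i).comp
        ((maSmul M i (MonoidAlgebra.single g (1 : K))).comp (LinearMap.proj i))
  | Sum.inr ⟨a, b⟩ =>
      (LinearMap.single K (fun j => M.M j) (D.t a)).comp
        ((M.act a b).comp (LinearMap.proj (D.s a)))

lemma genEnd_inl (i : D.Q0) (g : D.G i) (v : ∀ j, M.M j) :
    genEnd M (Sum.inl ⟨i, g⟩) v
      = Pi.single i ((MonoidAlgebra.single g (1 : K) : MonoidAlgebra K (D.G i)) • v i) :=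
  rfl

lemma genEnd_inr (a : D.Q1) (b : D.B a) (v : ∀ j, M.M j) :
    genEnd M (Sum.inr ⟨a, b⟩) v = Pi.single (D.t a) (M.act a b (v (D.s a))) := rfl

/-- Lift to the free algebra. -/
noncomputable def repFree : FreeAlgebra K D.Gen →ₐ[K] Module.End K (∀ i, M.M i) :=
  FreeAlgebra.lift K (genEnd M)

@[simp] lemma repFree_ι (x : D.Gen) : repFree M (FreeAlgebra.ι K x) = genEnd M x :=
  FreeAlgebra.lift_ι_apply _ _

lemma repFree_rel {x y : FreeAlgebra K D.Gen} (hrel : CatRel K D x y) :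
    repFree M x = repFree M y := by
  induction hrel with
  | grp_mul i g h =>
      erw [map_mul, repFree_ι, repFree_ι, repFree_ι]
      refine LinearMap.ext fun v => ?_
      rw [Module.End.mul_apply, genEnd_inl, genEnd_inl, genEnd_inl, Pi.single_eq_same,
        ← mul_smul, MonoidAlgebra.single_mul_single, one_mul]
  | grp_orth i j g h hij =>
      erw [map_mul, map_zero, repFree_ι, repFree_ι]
      refine LinearMap.ext fun v => ?_
      rw [Module.End.mul_apply, genEnd_inl, genEnd_inl, Pi.single_eq_of_ne hij,
        smul_zero, Pi.single_zero, LinearMap.zero_apply]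
  | unit =>
      rw [map_sum, map_one]
      refine LinearMap.ext fun v => ?_
      rw [LinearMap.sum_apply, Module.End.one_apply]
      have hterm : ∀ j : D.Q0,
          (repFree M (FreeAlgebra.ι K (Sum.inl ⟨j, (1 : D.G j)⟩))) v
            = Pi.single j (v j) := by
        intro j
        erw [repFree_ι, genEnd_inl, ← MonoidAlgebra.one_def, one_smul]
      rw [Finset.sum_congr rfl fun j _ => hterm j, Finset.univ_sum_single]
  | left_act a g b =>
      erw [map_mul, repFree_ι, repFree_ι, repFree_ι]
      refine LinearMap.ext fun v => ?_
      rw [Module.End.mul_apply, genEnd_inr, genEnd_inl, genEnd_inr, Pi.single_eq_same,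
        ← M.act_l]
  | right_act a b g =>
      erw [map_mul, repFree_ι, repFree_ι, repFree_ι]
      refine LinearMap.ext fun v => ?_
      rw [Module.End.mul_apply, genEnd_inl, genEnd_inr, genEnd_inr, Pi.single_eq_same,
        ← M.act_r]
  | left_orth j g a b h =>
      erw [map_mul, map_zero, repFree_ι, repFree_ι]
      refine LinearMap.ext fun v => ?_
      rw [Module.End.mul_apply, genEnd_inr, genEnd_inl, Pi.single_eq_of_ne h,
        smul_zero, Pi.single_zero, LinearMap.zero_apply]
  | right_orth a b j g h =>
      erw [map_mul, map_zero, repFree_ι, repFree_ι]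
      refine LinearMap.ext fun v => ?_
      rw [Module.End.mul_apply, genEnd_inl, genEnd_inr, Pi.single_eq_of_ne (Ne.symm h),
        map_zero, Pi.single_zero, LinearMap.zero_apply]

/-- The algebra map from the category algebra to endomorphisms of `⊕ᵢ Mᵢ`. -/
noncomputable def repA : CatAlg K D →ₐ[K] Module.End K (∀ i, M.M i) :=
  RingQuot.liftAlgHom K ⟨repFree M, fun _ _ h => repFree_rel M h⟩

@[simp] lemma repA_gen (x : D.Gen) : repA M (gen K D x) = genEnd M x := by
  unfold EIData.gen repA
  exact (RingQuot.liftAlgHom_mkAlgHom_apply (S := K) (repFree M)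
    (fun _ _ h => repFree_rel M h) _).trans (repFree_ι M x)

/-- The module structure on `⊕ᵢ Mᵢ` over the category algebra. -/
noncomputable def modF : Module (CatAlg K D) (∀ i, M.M i) :=
  Module.compHom _ (repA M).toRingHom

lemma modF_smul (x : CatAlg K D) (v : ∀ i, M.M i) :
    (letI := modF M; x • v) = repA M x v := rfl

end FunctorF

end EIEquiv
namespace EIEquiv

open EIData CategoryTheory

variable {K : Type} [Field K] {D : EIData}

section FunctorFObj

variable (K D)

/-- The object of `ModFin` attached to a representation. -/
noncomputable def Fobj (M : EIRep K D) : ModFin K D :=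
  letI := modF M
  { obj := ModuleCat.of (CatAlg K D) (∀ i, M.M i)
    property := by
      refine Module.Finite.equiv
        (M := ∀ i, M.M i)
        { toFun := id
          invFun := id
          map_add' := fun _ _ => rfl
          map_smul' := fun k v => by
            show (k • v : ∀ i, M.M i) = repA M (algebraMap K (CatAlg K D) k) v
            rw [AlgHom.commutes, Module.algebraMap_end_apply]
          left_inv := fun _ => rfl
          right_inv := fun _ => rfl } }

variable {K D}

/-- The underlying `K`-linear map on direct sums of a morphism of representations. -/
noncomputable def pif {M N : EIRep K D} (f : M ⟶ N) :
    (∀ i, M.M i) →ₗ[K] ∀ i, N.M i :=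
  LinearMap.pi fun i => ((f.f i).restrictScalars K).comp (LinearMap.proj i)

@[simp] lemma pif_apply {M N : EIRep K D} (f : M ⟶ N) (v : ∀ i, M.M i) (i : D.Q0) :
    pif f v i = f.f i (v i) := rfl

lemma pif_single {M N : EIRep K D} (f : M ⟶ N) (i : D.Q0) (m : M.M i) :
    pif f (Pi.single i m) = Pi.single i (f.f i m) := by
  funext j
  rw [pif_apply]
  exact Pi.apply_single (fun j x => f.f j x) (fun j => map_zero (f.f j)) i m j

lemma pif_free {M N : EIRep K D} (f : M ⟶ N) (y : FreeAlgebra K D.Gen)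
    (v : ∀ i, M.M i) :
    pif f (repFree M y v) = repFree N y (pif f v) := by
  induction y using FreeAlgebra.induction generalizing v with
  | grade0 r =>
      rw [AlgHom.commutes, AlgHom.commutes, Module.algebraMap_end_apply,
        Module.algebraMap_end_apply, map_smul]
  | grade1 x =>
      rw [repFree_ι, repFree_ι]
      obtain (⟨i, g⟩ | ⟨a, b⟩) := x
      · rw [genEnd_inl, genEnd_inl, pif_single, map_smul, pif_apply]
      · rw [genEnd_inr, genEnd_inr, pif_single, f.comm, pif_apply]
  | mul x y hx hy =>
      rw [map_mul, map_mul, Module.End.mul_apply, Module.End.mul_apply, hx, hy]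
  | add x y hx hy =>
      rw [map_add, map_add, LinearMap.add_apply, LinearMap.add_apply, map_add, hx, hy]

lemma pif_smul {M N : EIRep K D} (f : M ⟶ N) (x : CatAlg K D) (v : ∀ i, M.M i) :
    pif f (repA M x v) = repA N x (pif f v) := by
  obtain ⟨y, rfl⟩ := RingQuot.mkAlgHom_surjective K (CatRel K D) x
  rw [show repA M (RingQuot.mkAlgHom K (CatRel K D) y) = repFree M y from
      RingQuot.liftAlgHom_mkAlgHom_apply (S := K) _ _ _,
    show repA N (RingQuot.mkAlgHom K (CatRel K D) y) = repFree N y from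
      RingQuot.liftAlgHom_mkAlgHom_apply (S := K) _ _ _]
  exact pif_free f y v

variable (K D)

/-- The functor `rep(Q,X) ⥤ K𝒞-mod`. -/
noncomputable def Ffun : EIRep K D ⥤ ModFin K D where
  obj M := Fobj K D M
  map {M N} f :=
    letI := modF M
    letI := modF N
    ObjectProperty.homMk (ModuleCat.ofHom
    ({ toFun := pif f
       map_add' := map_add (pif f)
       map_smul' := fun x v => pif_smul f x v } :
      (Fobj K D M).obj →ₗ[CatAlg K D] (Fobj K D N).obj))
  map_id M := by
    refine InducedCategory.hom_ext (ModuleCat.hom_ext (LinearMap.ext fun v => ?_))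
    rfl
  map_comp {M N O} f g := by
    refine InducedCategory.hom_ext (ModuleCat.hom_ext (LinearMap.ext fun v => ?_))
    rfl

end FunctorFObj

end EIEquiv
namespace EIEquiv

open EIData CategoryTheory

variable {K : Type} [Field K] {D : EIData}

section FunctorG

variable (K D)

/-- The `K`-module structure on a module over the category algebra. -/
noncomputable def kMod (V : ModuleCat (CatAlg K D)) : Module K V :=
  Module.compHom V (algebraMap K (CatAlg K D))

attribute [local instance] kMod

lemma kSmul_def (V : ModuleCat (CatAlg K D)) (k : K) (v : V) :
    k • v = algebraMap K (CatAlg K D) k • v := rfl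

lemma catSmul_comm (V : ModuleCat (CatAlg K D)) (x : CatAlg K D) (k : K) (v : V) :
    x • (k • v) = k • (x • v) := by
  rw [kSmul_def, kSmul_def, ← mul_smul, ← mul_smul, Algebra.commutes]

/-- The `K`-submodule of `e_i`-fixed vectors, i.e. `e_i V`. -/
noncomputable def fixe (V : ModuleCat (CatAlg K D)) (i : D.Q0) : Submodule K V where
  carrier := {v | idem K D i • v = v}
  add_mem' := fun {u v} hu hv => by
    show idem K D i • (u + v) = u + v
    rw [smul_add, hu, hv]
  zero_mem' := smul_zero _
  smul_mem' := fun k v hv => by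
    show idem K D i • (k • v) = k • v
    rw [catSmul_comm, hv]

lemma fixe_mem {V : ModuleCat (CatAlg K D)} {i : D.Q0} (v : V)
    (h : idem K D i • v = v) : v ∈ fixe K D V i := h

lemma fixe_spec {V : ModuleCat (CatAlg K D)} {i : D.Q0} (m : fixe K D V i) :
    idem K D i • (m : V) = m := m.2

/-- The action of a group element on the fixed submodule. -/
noncomputable def gAct (V : ModuleCat (CatAlg K D)) (i : D.Q0) :
    D.G i →* Module.End K (fixe K D V i) where
  toFun g :=
    { toFun := fun m => ⟨gen K D (Sum.inl ⟨i, g⟩) • (m : V), by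
        apply fixe_mem
        rw [← mul_smul, idem_mul_gen_inl, if_pos rfl]⟩
      map_add' := fun u v => Subtype.ext (smul_add _ _ _)
      map_smul' := fun k v => Subtype.ext (catSmul_comm K D V _ k _) }
  map_one' := LinearMap.ext fun m => Subtype.ext m.2
  map_mul' g h := LinearMap.ext fun m => Subtype.ext <| by
    show gen K D (Sum.inl ⟨i, g * h⟩) • (m : V)
      = gen K D (Sum.inl ⟨i, g⟩) • (gen K D (Sum.inl ⟨i, h⟩) • (m : V))
    rw [← gen_grp_mul, mul_smul]

/-- The monoid algebra module structure on the fixed submodule. -/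
noncomputable def maMod (V : ModuleCat (CatAlg K D)) (i : D.Q0) :
    Module (MonoidAlgebra K (D.G i)) (fixe K D V i) :=
  Module.compHom _
    ((MonoidAlgebra.lift K (Module.End K (fixe K D V i)) (D.G i))
      (gAct K D V i)).toRingHom

attribute [local instance] maMod

lemma maSmul_def (V : ModuleCat (CatAlg K D)) (i : D.Q0)
    (x : MonoidAlgebra K (D.G i)) (m : fixe K D V i) :
    x • m = (MonoidAlgebra.lift K (Module.End K (fixe K D V i)) (D.G i))
      (gAct K D V i) x m := rfl

lemma maSingle_smul (V : ModuleCat (CatAlg K D)) (i : D.Q0) (g : D.G i)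
    (m : fixe K D V i) :
    (((MonoidAlgebra.single g (1 : K) : MonoidAlgebra K (D.G i)) • m : fixe K D V i) : V)
      = gen K D (Sum.inl ⟨i, g⟩) • (m : V) := by
  rw [maSmul_def, MonoidAlgebra.lift_single, one_smul]
  rfl

noncomputable instance maTower (V : ModuleCat (CatAlg K D)) (i : D.Q0) :
    IsScalarTower K (MonoidAlgebra K (D.G i)) (fixe K D V i) := by
  constructor
  intro k x m
  rw [maSmul_def, maSmul_def, map_smul, LinearMap.smul_apply]

/-- The arrow action on fixed submodules. -/
noncomputable def gact (V : ModuleCat (CatAlg K D)) (a : D.Q1) (b : D.B a) :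
    fixe K D V (D.s a) →ₗ[K] fixe K D V (D.t a) where
  toFun m := ⟨gen K D (Sum.inr ⟨a, b⟩) • (m : V), by
    apply fixe_mem
    rw [← mul_smul, idem_mul_gen_inr, if_pos rfl]⟩
  map_add' := fun u v => Subtype.ext (smul_add _ _ _)
  map_smul' := fun k v => Subtype.ext (catSmul_comm K D V _ k _)

lemma finiteV (N : ModFin K D) : Module.Finite K N.obj := by
  haveI := N.property
  exact Module.Finite.equiv
    (M := RestrictScalars K (CatAlg K D) N.obj)
    { toFun := id
      invFun := id
      map_add' := fun _ _ => rfl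
      map_smul' := fun _ _ => rfl
      left_inv := fun _ => rfl
      right_inv := fun _ => rfl }

/-- The representation attached to a finite-dimensional module over the category
algebra. -/
noncomputable def Gobj (N : ModFin K D) : EIRep K D where
  M i := fixe K D N.obj i
  acg := fun i => inferInstance
  modK := fun i => inferInstance
  modA := fun i => maMod K D N.obj i
  tower := fun i => maTower K D N.obj i
  findim := fun i => by
    haveI := finiteV K D N
    infer_instance
  act a b := gact K D N.obj a b
  act_r := fun a b g m => Subtype.ext <| by
    show gen K D (Sum.inr ⟨a, D.r a b g⟩) • (m : N.obj)
      = gen K D (Sum.inr ⟨a, b⟩)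
        • (((MonoidAlgebra.single g (1 : K) : MonoidAlgebra K (D.G (D.s a))) • m
            : fixe K D N.obj (D.s a)) : N.obj)
    rw [maSingle_smul, ← mul_smul, gen_right_act]
  act_l := fun a g b m => Subtype.ext <| by
    show gen K D (Sum.inr ⟨a, D.l a g b⟩) • (m : N.obj)
      = (((MonoidAlgebra.single g (1 : K) : MonoidAlgebra K (D.G (D.t a))) •
          gact K D N.obj a b m : fixe K D N.obj (D.t a)) : N.obj)
    rw [maSingle_smul]
    show _ = gen K D (Sum.inl ⟨D.t a, g⟩) • (gen K D (Sum.inr ⟨a, b⟩) • (m : N.obj))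
    rw [← mul_smul, gen_left_act]

/-- The coercion of a morphism in `ModFin` to a linear map. -/
noncomputable def homL {N N' : ModFin K D} (φ : N ⟶ N') : N.obj →ₗ[CatAlg K D] N'.obj := φ.hom.hom

/-- The `K`-linear map between fixed submodules induced by a module map. -/
noncomputable def GmapK {N N' : ModuleCat (CatAlg K D)}
    (ψ : N →ₗ[CatAlg K D] N') (i : D.Q0) :
    fixe K D N i →ₗ[K] fixe K D N' i where
  toFun m := ⟨ψ (m : N), by
    apply fixe_mem
    rw [← map_smul, fixe_spec]⟩
  map_add' := fun u v => Subtype.ext (map_add ψ _ _)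
  map_smul' := fun k m => Subtype.ext <| by
    show ψ (algebraMap K (CatAlg K D) k • (m : N)) = algebraMap K (CatAlg K D) k • ψ m
    exact map_smul ψ _ _

lemma GmapK_ma {N N' : ModuleCat (CatAlg K D)} (ψ : N →ₗ[CatAlg K D] N')
    (i : D.Q0) (x : MonoidAlgebra K (D.G i)) (m : fixe K D N i) :
    GmapK K D ψ i (x • m) = x • GmapK K D ψ i m := by
  induction x using MonoidAlgebra.induction_linear with
  | zero => rw [zero_smul, zero_smul, map_zero]
  | add x y hx hy => rw [add_smul, add_smul, map_add, hx, hy]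
  | single g k =>
      have hk : (MonoidAlgebra.single g k : MonoidAlgebra K (D.G i))
          = k • (MonoidAlgebra.single g (1 : K) : MonoidAlgebra K (D.G i)) := by
        rw [MonoidAlgebra.smul_single', mul_one]
      rw [hk, smul_assoc, smul_assoc, map_smul]
      congr 1
      refine Subtype.ext ?_
      show ψ ((((MonoidAlgebra.single g (1 : K) : MonoidAlgebra K (D.G i)) • m :
          fixe K D N i) : N)) = _
      rw [maSingle_smul, maSingle_smul]
      exact map_smul ψ _ _

/-- The morphism of representations attached to a module map. -/
noncomputable def Gmap {N N' : ModFin K D} (φ : N ⟶ N') : Gobj K D N ⟶ Gobj K D N' :=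
  let ψ : N.obj →ₗ[CatAlg K D] N'.obj := φ.hom.hom
  { f := fun i =>
      { toFun := GmapK K D ψ i
        map_add' := map_add _
        map_smul' := fun x m => GmapK_ma K D ψ i x m }
    comm := fun a b m => Subtype.ext <| by
      show ψ (gen K D (Sum.inr ⟨a, b⟩) • m.1)
        = gen K D (Sum.inr ⟨a, b⟩) • ψ m.1
      exact map_smul ψ _ _ }

/-- The functor `K𝒞-mod ⥤ rep(Q,X)`. -/
noncomputable def Gfun : ModFin K D ⥤ EIRep K D where
  obj N := Gobj K D N
  map {N N'} φ := Gmap K D φ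
  map_id N := by
    refine EIRepHom.ext (funext fun i => ?_)
    refine LinearMap.ext fun m => ?_
    rfl
  map_comp {N N' N''} φ ψ := by
    refine EIRepHom.ext (funext fun i => ?_)
    refine LinearMap.ext fun m => ?_
    rfl

end FunctorG

end EIEquiv
namespace EIEquiv

open EIData CategoryTheory

variable {K : Type} [Field K] {D : EIData}

section Unit

attribute [local instance] kMod maMod

variable (K D)

/-- A morphism of representations with bijective components is an isomorphism. -/
noncomputable def repIso {M N : EIRep K D} (f : M ⟶ N)
    (h : ∀ i, Function.Bijective (f.f i)) : M ≅ N where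
  hom := f
  inv :=
    { f := fun i => ((LinearEquiv.ofBijective (f.f i) (h i)).symm :
        N.M i →ₗ[MonoidAlgebra K (D.G i)] M.M i)
      comm := fun a b v => by
        apply (h (D.t a)).1
        rw [f.comm]
        exact ((LinearEquiv.ofBijective (f.f (D.t a)) (h (D.t a))).apply_symm_apply
            (N.act a b v)).trans
          (congrArg (N.act a b)
            ((LinearEquiv.ofBijective (f.f (D.s a)) (h (D.s a))).apply_symm_apply
              v).symm) }
  hom_inv_id := EIRepHom.ext (funext fun i => LinearMap.ext fun m =>
    (LinearEquiv.ofBijective (f.f i) (h i)).symm_apply_apply m)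
  inv_hom_id := EIRepHom.ext (funext fun i => LinearMap.ext fun v =>
    (LinearEquiv.ofBijective (f.f i) (h i)).apply_symm_apply v)

lemma repA_algebraMap (M : EIRep K D) (k : K) (v : ∀ i, M.M i) :
    repA M (algebraMap K (CatAlg K D) k) v = k • v := by
  rw [AlgHom.commutes, Module.algebraMap_end_apply]

/-- The unit component element: `m ↦ Pi.single i m` into the fixed submodule. -/
noncomputable def etaE (M : EIRep K D) (i : D.Q0) (m : M.M i) :
    (Gobj K D (Fobj K D M)).M i :=
  ⟨Pi.single i m, by
    apply fixe_mem
    show repA M (gen K D (Sum.inl ⟨i, (1 : D.G i)⟩)) (Pi.single i m) = Pi.single i m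
    erw [repA_gen, genEnd_inl, Pi.single_eq_same, ← MonoidAlgebra.one_def, one_smul]⟩

lemma etaE_single_g (M : EIRep K D) (i : D.Q0) (g : D.G i) (m : M.M i) :
    ((MonoidAlgebra.single g (1 : K) : MonoidAlgebra K (D.G i)) • etaE K D M i m).1
      = Pi.single i ((MonoidAlgebra.single g (1 : K) : MonoidAlgebra K (D.G i)) • m) := by
  refine (maSingle_smul K D (Fobj K D M).obj i g (etaE K D M i m)).trans ?_
  show repA M (gen K D (Sum.inl ⟨i, g⟩)) (Pi.single i m) = _
  erw [repA_gen, genEnd_inl, Pi.single_eq_same]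

lemma etaE_add (M : EIRep K D) (i : D.Q0) (u v : M.M i) :
    etaE K D M i (u + v) = etaE K D M i u + etaE K D M i v := by
  refine Subtype.ext ?_
  show Pi.single i (u + v) = (etaE K D M i u + etaE K D M i v).1
  rw [Pi.single_add]
  rfl

lemma etaE_ma (M : EIRep K D) (i : D.Q0) (x : MonoidAlgebra K (D.G i)) (m : M.M i) :
    etaE K D M i (x • m) = x • etaE K D M i m := by
  induction x using MonoidAlgebra.induction_linear with
  | zero =>
      rw [zero_smul, zero_smul]
      refine Subtype.ext ?_
      show Pi.single i (0 : M.M i) = _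
      rw [Pi.single_zero]
      rfl
  | add x y hx hy =>
      rw [add_smul, add_smul, etaE_add, hx, hy]
  | single g k =>
      have h1 : (MonoidAlgebra.single g k : MonoidAlgebra K (D.G i))
          = k • (MonoidAlgebra.single g (1 : K) : MonoidAlgebra K (D.G i)) := by
        rw [MonoidAlgebra.smul_single', mul_one]
      rw [h1, smul_assoc, smul_assoc]
      refine Subtype.ext ?_
      show Pi.single i (k • ((MonoidAlgebra.single g (1 : K) :
          MonoidAlgebra K (D.G i)) • m))
        = repA M (algebraMap K (CatAlg K D) k)
            (((MonoidAlgebra.single g (1 : K) : MonoidAlgebra K (D.G i)) •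
              etaE K D M i m).1)
      erw [repA_algebraMap, etaE_single_g, ← Pi.single_smul]

/-- The unit component as a `MonoidAlgebra`-linear map. -/
noncomputable def etaF (M : EIRep K D) (i : D.Q0) :
    M.M i →ₗ[MonoidAlgebra K (D.G i)] (Gobj K D (Fobj K D M)).M i where
  toFun m := etaE K D M i m
  map_add' := fun u v => Subtype.ext <| by
    show Pi.single i (u + v) = (etaE K D M i u + etaE K D M i v).1
    rw [Pi.single_add]
    rfl
  map_smul' := fun x m => etaE_ma K D M i x m

lemma etaF_bij (M : EIRep K D) (i : D.Q0) : Function.Bijective (etaF K D M i) := by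
  constructor
  · intro m m' hmm
    have h2 := congrArg (fun v : (Gobj K D (Fobj K D M)).M i => v.1 i) hmm
    have h3 : (Pi.single i m : ∀ j, M.M j) i = (Pi.single i m' : ∀ j, M.M j) i := h2
    simpa using h3
  · intro v
    refine ⟨v.1 i, Subtype.ext ?_⟩
    show Pi.single i (v.1 i) = v.1
    have hv : idem K D i • v.1 = v.1 := v.2
    erw [show idem K D i • v.1
        = repA M (gen K D (Sum.inl ⟨i, (1 : D.G i)⟩)) v.1 from rfl,
      repA_gen, genEnd_inl, ← MonoidAlgebra.one_def, one_smul] at hv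
    exact hv

/-- The unit morphism. -/
noncomputable def etaHom (M : EIRep K D) : M ⟶ (Ffun K D ⋙ Gfun K D).obj M where
  f i := etaF K D M i
  comm := fun a b m => Subtype.ext <| by
    show Pi.single (D.t a) (M.act a b m)
      = repA M (gen K D (Sum.inr ⟨a, b⟩)) (Pi.single (D.s a) m)
    erw [repA_gen, genEnd_inr, Pi.single_eq_same]

/-- The unit natural isomorphism. -/
noncomputable def unitIso : 𝟭 (EIRep K D) ≅ Ffun K D ⋙ Gfun K D :=
  NatIso.ofComponents
    (fun M => repIso K D (etaHom K D M) (etaF_bij K D M))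
    (fun {M M'} f => by
      refine EIRepHom.ext (funext fun i => ?_)
      refine LinearMap.ext fun m => ?_
      refine Subtype.ext ?_
      exact (pif_single f i m).symm)

end Unit

end EIEquiv
namespace EIEquiv

open EIData CategoryTheory

variable {K : Type} [Field K] {D : EIData}

section Counit

attribute [local instance] kMod maMod

variable (K D)

/-- The counit underlying function: sum of the components. -/
noncomputable def sfun (N : ModFin K D) (v : ∀ i, (Gobj K D N).M i) : N.obj :=
  ∑ i, (v i).1

lemma sfun_add (N : ModFin K D) (u w : ∀ i, (Gobj K D N).M i) :
    sfun K D N (u + w) = sfun K D N u + sfun K D N w := by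
  unfold sfun
  rw [← Finset.sum_add_distrib]
  rfl

lemma sfun_single (N : ModFin K D) (i : D.Q0) (x : (Gobj K D N).M i) :
    sfun K D N (Pi.single i x) = x.1 := by
  unfold sfun
  rw [Finset.sum_eq_single i (fun j _ hji => by rw [Pi.single_eq_of_ne hji]; rfl)
    (by simp), Pi.single_eq_same]

lemma gobj_single (N : ModFin K D) (i : D.Q0) (g : D.G i) (m : (Gobj K D N).M i) :
    ((MonoidAlgebra.single g (1 : K) : MonoidAlgebra K (D.G i)) • m).1
      = gen K D (Sum.inl ⟨i, g⟩) • m.1 :=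
  maSingle_smul K D N.obj i g m

lemma sfun_free (N : ModFin K D) (y : FreeAlgebra K D.Gen)
    (v : ∀ i, (Gobj K D N).M i) :
    sfun K D N (repFree (Gobj K D N) y v)
      = @HSMul.hSMul (CatAlg K D) N.obj N.obj _ (RingQuot.mkAlgHom K (CatRel K D) y)
        (sfun K D N v) := by
  induction y using FreeAlgebra.induction generalizing v with
  | grade0 r =>
      rw [show repFree (Gobj K D N) (algebraMap K _ r)
          = algebraMap K (Module.End K (∀ i, (Gobj K D N).M i)) r from
          AlgHom.commutes _ r,
        Module.algebraMap_end_apply,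
        show (RingQuot.mkAlgHom K (CatRel K D)) (algebraMap K _ r)
          = algebraMap K (CatAlg K D) r from AlgHom.commutes _ r]
      show ∑ i, algebraMap K (CatAlg K D) r • (v i).1
        = algebraMap K (CatAlg K D) r • ∑ i, (v i).1
      rw [Finset.smul_sum]
  | grade1 x =>
      obtain (⟨i, g⟩ | ⟨a, b⟩) := x
      · erw [repFree_ι, genEnd_inl, sfun_single, gobj_single]
        show gen K D (Sum.inl ⟨i, g⟩) • (v i).1
          = gen K D (Sum.inl ⟨i, g⟩) • ∑ j, (v j).1
        rw [Finset.smul_sum]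
        refine (Finset.sum_eq_single (f := fun j => gen K D (Sum.inl ⟨i, g⟩) • (v j).1)
          i (fun j _ hji => ?_)
          (by intro h; exact absurd (Finset.mem_univ _) h)).symm
        show gen K D (Sum.inl ⟨i, g⟩) • (v j).1 = 0
        have hj : idem K D j • (v j).1 = (v j).1 := (v j).2
        rw [← hj, ← mul_smul, show idem K D j = gen K D (Sum.inl ⟨j, (1 : D.G j)⟩)
          from rfl, gen_grp_orth K D i j g 1 (Ne.symm hji), zero_smul]
      · erw [repFree_ι, genEnd_inr, sfun_single]
        show gen K D (Sum.inr ⟨a, b⟩) • (v (D.s a)).1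
          = gen K D (Sum.inr ⟨a, b⟩) • ∑ j, (v j).1
        rw [Finset.smul_sum]
        refine (Finset.sum_eq_single (f := fun j => gen K D (Sum.inr ⟨a, b⟩) • (v j).1)
          (D.s a) (fun j _ hji => ?_)
          (by intro h; exact absurd (Finset.mem_univ _) h)).symm
        show gen K D (Sum.inr ⟨a, b⟩) • (v j).1 = 0
        have hj : idem K D j • (v j).1 = (v j).1 := (v j).2
        rw [← hj, ← mul_smul, gen_inr_mul_idem, if_neg (Ne.symm hji), zero_smul]
  | mul x y hx hy =>
      erw [map_mul, map_mul, Module.End.mul_apply, hx, hy, mul_smul]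
  | add x y hx hy =>
      erw [map_add, map_add, LinearMap.add_apply, sfun_add, hx, hy, add_smul]

/-- The counit as a module map. -/
noncomputable def sA (N : ModFin K D) :
    (Fobj K D (Gobj K D N)).obj →ₗ[CatAlg K D] N.obj where
  toFun := sfun K D N
  map_add' := sfun_add K D N
  map_smul' := fun x v => by
    obtain ⟨y, rfl⟩ := RingQuot.mkAlgHom_surjective K (CatRel K D) x
    show sfun K D N (repA (Gobj K D N) (RingQuot.mkAlgHom K (CatRel K D) y) v) = _
    rw [show repA (Gobj K D N) (RingQuot.mkAlgHom K (CatRel K D) y)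
        = repFree (Gobj K D N) y from
        RingQuot.liftAlgHom_mkAlgHom_apply (S := K) _ _ _]
    exact sfun_free K D N y v

/-- The inverse counit function. -/
noncomputable def taufun (N : ModFin K D) (w : N.obj) (i : D.Q0) :
    (Gobj K D N).M i :=
  ⟨idem K D i • w, by
    apply fixe_mem
    rw [← mul_smul, idem_mul_idem]⟩

lemma s_tau (N : ModFin K D) (w : N.obj) : sfun K D N (taufun K D N w) = w := by
  show ∑ i, idem K D i • w = w
  rw [← Finset.sum_smul, sum_idem, one_smul]

lemma tau_s (N : ModFin K D) (v : ∀ i, (Gobj K D N).M i) :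
    taufun K D N (sfun K D N v) = v := by
  funext i
  refine Subtype.ext ?_
  show idem K D i • ∑ j, (v j).1 = (v i).1
  rw [Finset.smul_sum]
  refine (Finset.sum_eq_single (f := fun j => idem K D i • (v j).1)
    i (fun j _ hji => ?_)
    (by intro h; exact absurd (Finset.mem_univ _) h)).trans ((v i).2)
  show idem K D i • (v j).1 = 0
  have hj : idem K D j • (v j).1 = (v j).1 := (v j).2
  rw [← hj, ← mul_smul, show idem K D i = gen K D (Sum.inl ⟨i, (1 : D.G i)⟩)
    from rfl, show idem K D j = gen K D (Sum.inl ⟨j, (1 : D.G j)⟩) from rfl,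
    gen_grp_orth K D i j 1 1 (Ne.symm hji), zero_smul]

lemma sA_bij (N : ModFin K D) : Function.Bijective (sA K D N) := by
  constructor
  · intro u w h
    have := congrArg (taufun K D N) h
    exact (tau_s K D N u).symm.trans (this.trans (tau_s K D N w))
  · exact fun w => ⟨taufun K D N w, s_tau K D N w⟩

/-- The counit natural isomorphism. -/
noncomputable def counitIso : Gfun K D ⋙ Ffun K D ≅ 𝟭 (ModFin K D) :=
  NatIso.ofComponents
    (fun N =>
      { hom := ObjectProperty.homMk (ModuleCat.ofHom (X := (Fobj K D (Gobj K D N)).obj)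
            (Y := N.obj) (sA K D N))
        inv := ObjectProperty.homMk (ModuleCat.ofHom (X := N.obj)
          (Y := (Fobj K D (Gobj K D N)).obj) ((LinearEquiv.ofBijective (sA K D N) (sA_bij K D N)).symm :
          N.obj →ₗ[CatAlg K D] (Fobj K D (Gobj K D N)).obj))
        hom_inv_id := InducedCategory.hom_ext (ModuleCat.hom_ext (LinearMap.ext fun v =>
          (LinearEquiv.ofBijective (sA K D N) (sA_bij K D N)).symm_apply_apply v))
        inv_hom_id := InducedCategory.hom_ext (ModuleCat.hom_ext (LinearMap.ext fun w =>
          (LinearEquiv.ofBijective (sA K D N) (sA_bij K D N)).apply_symm_apply w)) })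
    (fun {N N'} φ => by
      refine InducedCategory.hom_ext (ModuleCat.hom_ext (LinearMap.ext fun v => ?_))
      show ∑ i, homL K D φ ((v i).1) = homL K D φ (∑ i, (v i).1)
      rw [map_sum])

/-- The main equivalence. -/
noncomputable def mainEquiv : EIRep K D ≌ ModFin K D :=
  CategoryTheory.Equivalence.mk (Ffun K D) (Gfun K D) (unitIso K D) (counitIso K D)

end Counit

end EIEquiv
namespace EIEquiv

open EIData CategoryTheory

universe u v

section Shrinking

variable {K : Type} [Field K] {D : EIData}

attribute [local instance] kMod

variable (K D)

lemma smallV (N : ModFin.{v} K D) : Small.{u} N.obj := by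
  haveI := finiteV K D N
  exact small_of_injective
    (f := (Module.finBasis K N.obj).equivFun) (LinearEquiv.injective _)

/-- Restriction of scalars of a linear equivalence. -/
noncomputable def rsEquiv {V : Type v} {W : Type u} [AddCommGroup V] [AddCommGroup W]
    [Module (CatAlg K D) V] [Module (CatAlg K D) W] (e : V ≃ₗ[CatAlg K D] W) :
    RestrictScalars K (CatAlg K D) V ≃ₗ[K] RestrictScalars K (CatAlg K D) W where
  toFun := e
  invFun := e.symm
  map_add' := e.map_add
  map_smul' := fun k w => e.map_smul (algebraMap K (CatAlg K D) k) w
  left_inv := e.left_inv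
  right_inv := e.right_inv

/-- The shrink functor object part. -/
noncomputable def shObj (N : ModFin.{v} K D) : ModFin.{u} K D :=
  haveI : Small.{u} N.obj := smallV K D N
  { obj := ModuleCat.of (CatAlg K D) (Shrink.{u} N.obj)
    property := by
      haveI := N.property
      exact Module.Finite.equiv
        (rsEquiv K D (Shrink.linearEquiv (CatAlg K D) N.obj).symm) }

/-- The shrink linear equivalence at each object. -/
noncomputable def shE (N : ModFin.{v} K D) :
    N.obj ≃ₗ[CatAlg K D] (shObj.{u} K D N).obj :=
  haveI : Small.{u} N.obj := smallV K D N
  (Shrink.linearEquiv (CatAlg K D) N.obj).symm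

/-- The shrink functor. -/
noncomputable def shFun : ModFin.{v} K D ⥤ ModFin.{u} K D where
  obj N := shObj.{u} K D N
  map {N N'} φ :=
    ObjectProperty.homMk (ModuleCat.ofHom ((shE.{u} K D N').toLinearMap.comp
      ((homL K D φ).comp (shE.{u} K D N).symm.toLinearMap)))
  map_id N := by
    refine InducedCategory.hom_ext (ModuleCat.hom_ext (LinearMap.ext fun w => ?_))
    show shE.{u} K D N ((shE.{u} K D N).symm w) = w
    rw [LinearEquiv.apply_symm_apply]
  map_comp {N N' N''} φ ψ := by
    refine InducedCategory.hom_ext (ModuleCat.hom_ext (LinearMap.ext fun w => ?_))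
    show shE.{u} K D N''
        (homL K D ψ (homL K D φ ((shE.{u} K D N).symm w)))
      = shE.{u} K D N''
          (homL K D ψ ((shE.{u} K D N').symm
            (shE.{u} K D N' (homL K D φ ((shE.{u} K D N).symm w)))))
    rw [LinearEquiv.symm_apply_apply]

/-- The double-shrink natural isomorphism. -/
noncomputable def uni : 𝟭 (ModFin.{v} K D) ≅ shFun.{u, v} K D ⋙ shFun.{v, u} K D :=
  NatIso.ofComponents
    (fun N =>
      { hom := ObjectProperty.homMk (ModuleCat.ofHom
          ((shE.{v} K D (shObj.{u} K D N)).toLinearMap.comp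
          (shE.{u} K D N).toLinearMap))
        inv := ObjectProperty.homMk (ModuleCat.ofHom
          ((shE.{u} K D N).symm.toLinearMap.comp
          (shE.{v} K D (shObj.{u} K D N)).symm.toLinearMap))
        hom_inv_id := InducedCategory.hom_ext (ModuleCat.hom_ext (LinearMap.ext fun w => by
          show (shE.{u} K D N).symm ((shE.{v} K D (shObj.{u} K D N)).symm
            (shE.{v} K D (shObj.{u} K D N) (shE.{u} K D N w))) = w
          rw [LinearEquiv.symm_apply_apply, LinearEquiv.symm_apply_apply]))
        inv_hom_id := InducedCategory.hom_ext (ModuleCat.hom_ext (LinearMap.ext fun w => by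
          show shE.{v} K D (shObj.{u} K D N) (shE.{u} K D N ((shE.{u} K D N).symm
            ((shE.{v} K D (shObj.{u} K D N)).symm w))) = w
          erw [LinearEquiv.apply_symm_apply, LinearEquiv.apply_symm_apply])) })
    (fun {N N'} φ => by
      refine InducedCategory.hom_ext (ModuleCat.hom_ext (LinearMap.ext fun w => ?_))
      show shE.{v} K D (shObj.{u} K D N') (shE.{u} K D N' (homL K D φ w))
        = shE.{v} K D (shObj.{u} K D N')
            (homL K D ((shFun.{u, v} K D).map φ)
              ((shE.{v} K D (shObj.{u} K D N)).symm
                (shE.{v} K D (shObj.{u} K D N) (shE.{u} K D N w))))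
      rw [LinearEquiv.symm_apply_apply]
      show _ = shE.{v} K D (shObj.{u} K D N')
            (shE.{u} K D N' (homL K D φ ((shE.{u} K D N).symm (shE.{u} K D N w))))
      rw [LinearEquiv.symm_apply_apply])

/-- The shrink equivalence between universes. -/
noncomputable def shEquiv : ModFin.{v} K D ≌ ModFin.{u} K D :=
  CategoryTheory.Equivalence.mk (shFun.{u, v} K D) (shFun.{v, u} K D)
    (uni.{u, v} K D) (uni.{v, u} K D).symm

end Shrinking

end EIEquiv
/-- For a finite acyclic EI quiver `(Q,X)` with associated finite EI
category `𝒞 = 𝒞(Q,X)`, the category `rep(Q,X)` of representations of `(Q,X)` is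
equivalent to the category `K𝒞-mod` of finite-dimensional left modules over the
category algebra `K𝒞`. -/
theorem rep_equiv_catAlg_mod (hacy : D.Acyclic) :
    Nonempty (EIRep K D ≌ ModFin K D) := by
  exact ⟨(EIEquiv.mainEquiv K D).trans (EIEquiv.shEquiv K D)⟩
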